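/- Let (T, T̂₂, Ť₂, T₀) be a multiplier bimonad on a monoidal category C such that T₀ : TI ⟶ I and, for all objects X, Y, the (equal) composites T(TX ⊗ TY) ⟶ TX ⊗ TY given by T̂₂^{TX,Y} ≫ (T̂₂^{I,X} ⊗ 1_{TY}) ≫ (T₀ ⊗ 1_{TX} ⊗ 1_{TY}) and by Ť₂^{X,TY} ≫ (1_{TX} ⊗ Ť₂^{Y,I}) ≫ (1_{TX} ⊗ 1_{TY} ⊗ T₀) (identifying T²X = T(I ⊗ TX) = T(TX ⊗ I)) are split epimorphisms. Let (Q, q̂, q̌) and (P, p̂, p̌) be modules over this multiplier bimonad. Then P ⊗ Q is a module via r̂_X := q̂_{X⊗P} ≫ (p̂_X ⊗ 1_Q) : T(X ⊗ P ⊗ Q) ⟶ TX ⊗ P ⊗ Q and ř_X := p̌_{Q⊗X} ≫ (1_P ⊗ q̌_X) : T(P ⊗ Q ⊗ X) ⟶ P ⊗ Q ⊗ TX; in particular the interchange law p̌_{X⊗Q} ≫ (1_P ⊗ q̂_X) = q̂_{P⊗X} ≫ (p̌_X ⊗ 1_Q) holds as natural transformations T(P ⊗ X ⊗ Q) ⟶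 P ⊗ TX ⊗ Q, and r̂_I ≫ (T₀ ⊗ 1_{P⊗Q}) = ř_I ≫ (1_{P⊗Q} ⊗ T₀) as morphisms T(P ⊗ Q) ⟶ P ⊗ Q, this common composite being a split epimorphism. -/

import Mathlib

open CategoryTheory Category MonoidalCategory

universe v u

set_option maxHeartbeats 3200000

variable {C : Type u} [Category.{v} C] [MonoidalCategory C]

/-- The monoidal product of two modules over a multiplier bimonad
`(T, T̂₂, Ť₂, T₀)` is again a module, via
`r̂_X := q̂_{X⊗P} ≫ (p̂_X ⊗ 1_Q)` and `ř_X := p̌_{Q⊗X} ≫ (1_P ⊗ q̌_X)`;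
in particular the interchange law `p̌_{X⊗Q} ≫ (1_P ⊗ q̂_X) = q̂_{P⊗X} ≫ (p̌_X ⊗ 1_Q)`
holds, the two induced actions of `T` on `P ⊗ Q` agree, and this common action is
a split epimorphism. -/
theorem module_tensor_of_multiplierBimonad
    (T : C ⥤ C)
    (Th₂ : ∀ X Y : C, T.obj (X ⊗ T.obj Y) ⟶ T.obj X ⊗ T.obj Y)
    (Tc₂ : ∀ X Y : C, T.obj (T.obj X ⊗ Y) ⟶ T.obj X ⊗ T.obj Y)
    (T₀ : T.obj (𝟙_ C) ⟶ 𝟙_ C)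
    -- naturality
    (hThnat : ∀ {X X' Y Y' : C} (f : X ⟶ X') (g : Y ⟶ Y'),
      T.map (f ⊗ₘ T.map g) ≫ Th₂ X' Y' = Th₂ X Y ≫ (T.map f ⊗ₘ T.map g))
    (hTcnat : ∀ {X X' Y Y' : C} (f : X ⟶ X') (g : Y ⟶ Y'),
      T.map (T.map f ⊗ₘ g) ≫ Tc₂ X' Y' = Tc₂ X Y ≫ (T.map f ⊗ₘ T.map g))
    -- left multiplier bimonad axioms for `T̂₂`
    (hThassoc : ∀ X Y Z : C,
      T.map ((X ◁ Th₂ Y Z) ≫ (α_ X (T.obj Y) (T.obj Z)).inv) ≫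
          Th₂ (X ⊗ T.obj Y) Z ≫ (Th₂ X Y ▷ T.obj Z) =
        Th₂ X (Y ⊗ T.obj Z) ≫ (T.obj X ◁ Th₂ Y Z) ≫
          (α_ (T.obj X) (T.obj Y) (T.obj Z)).inv)
    (hThcou : ∀ X : C,
      Th₂ X (𝟙_ C) ≫ (T.obj X ◁ T₀) ≫ (ρ_ (T.obj X)).hom =
        T.map ((X ◁ T₀) ≫ (ρ_ X).hom))
    -- right multiplier bimonad axioms for `Ť₂`
    (hTcassoc : ∀ X Y Z : C,
      T.map ((Tc₂ X Y ▷ Z) ≫ (α_ (T.obj X) (T.obj Y) Z).hom) ≫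
          Tc₂ X (T.obj Y ⊗ Z) ≫ (T.obj X ◁ Tc₂ Y Z) =
        Tc₂ (T.obj X ⊗ Y) Z ≫ (Tc₂ X Y ▷ T.obj Z) ≫
          (α_ (T.obj X) (T.obj Y) (T.obj Z)).hom)
    (hTccou : ∀ X : C,
      Tc₂ (𝟙_ C) X ≫ (T₀ ▷ T.obj X) ≫ (λ_ (T.obj X)).hom =
        T.map ((T₀ ▷ X) ≫ (λ_ X).hom))
    -- the compatibility conditions of a multiplier bimonad
    (hTcompat : ∀ X Y Z : C,
      Tc₂ X (Y ⊗ T.obj Z) ≫ (T.obj X ◁ Th₂ Y Z) =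
        T.map (α_ (T.obj X) Y (T.obj Z)).inv ≫ Th₂ (T.obj X ⊗ Y) Z ≫
          (Tc₂ X Y ▷ T.obj Z) ≫ (α_ (T.obj X) (T.obj Y) (T.obj Z)).hom)
    (hTmu : ∀ X : C,
      T.map (λ_ (T.obj X)).inv ≫ Th₂ (𝟙_ C) X ≫ (T₀ ▷ T.obj X) ≫
          (λ_ (T.obj X)).hom =
        T.map (ρ_ (T.obj X)).inv ≫ Tc₂ X (𝟙_ C) ≫ (T.obj X ◁ T₀) ≫
          (ρ_ (T.obj X)).hom)
    -- the split-epimorphism assumptions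
    (hT₀ : IsSplitEpi T₀)
    (hsplith : ∀ X Y : C, IsSplitEpi
      (Th₂ (T.obj X) Y ≫
        ((T.map (λ_ (T.obj X)).inv ≫ Th₂ (𝟙_ C) X ≫ (T₀ ▷ T.obj X) ≫
          (λ_ (T.obj X)).hom) ▷ T.obj Y)))
    (hsplitc : ∀ X Y : C, IsSplitEpi
      (Tc₂ X (T.obj Y) ≫
        (T.obj X ◁ (T.map (ρ_ (T.obj Y)).inv ≫ Tc₂ Y (𝟙_ C) ≫
          (T.obj Y ◁ T₀) ≫ (ρ_ (T.obj Y)).hom))))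
    -- a module `(Q, q̂, q̌)`
    (Q : C)
    (qh : ∀ X : C, T.obj (X ⊗ Q) ⟶ T.obj X ⊗ Q)
    (qc : ∀ X : C, T.obj (Q ⊗ X) ⟶ Q ⊗ T.obj X)
    (hqhnat : ∀ {X X' : C} (f : X ⟶ X'),
      T.map (f ▷ Q) ≫ qh X' = qh X ≫ (T.map f ▷ Q))
    (hqcnat : ∀ {X X' : C} (f : X ⟶ X'),
      T.map (Q ◁ f) ≫ qc X' = qc X ≫ (Q ◁ T.map f))
    (hqh : ∀ X Y : C,
      T.map ((X ◁ qh Y) ≫ (α_ X (T.obj Y) Q).inv) ≫ qh (X ⊗ T.obj Y) ≫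
          (Th₂ X Y ▷ Q) =
        Th₂ X (Y ⊗ Q) ≫ (T.obj X ◁ qh Y) ≫ (α_ (T.obj X) (T.obj Y) Q).inv)
    (hqc : ∀ X Y : C,
      T.map ((qc X ▷ Y) ≫ (α_ Q (T.obj X) Y).hom) ≫ qc (T.obj X ⊗ Y) ≫
          (Q ◁ Tc₂ X Y) =
        Tc₂ (Q ⊗ X) Y ≫ (qc X ▷ T.obj Y) ≫ (α_ Q (T.obj X) (T.obj Y)).hom)
    (hqcompat₁ : ∀ X Y : C,
      T.map (α_ (T.obj X) Y Q).inv ≫ qh (T.obj X ⊗ Y) ≫ (Tc₂ X Y ▷ Q) =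
        Tc₂ X (Y ⊗ Q) ≫ (T.obj X ◁ qh Y) ≫ (α_ (T.obj X) (T.obj Y) Q).inv)
    (hqcompat₂ : ∀ X Y : C,
      qc (X ⊗ T.obj Y) ≫ (Q ◁ Th₂ X Y) =
        T.map (α_ Q X (T.obj Y)).inv ≫ Th₂ (Q ⊗ X) Y ≫ (qc X ▷ T.obj Y) ≫
          (α_ Q (T.obj X) (T.obj Y)).hom)
    (hqact : T.map (λ_ Q).inv ≫ qh (𝟙_ C) ≫ (T₀ ▷ Q) ≫ (λ_ Q).hom =
      T.map (ρ_ Q).inv ≫ qc (𝟙_ C) ≫ (Q ◁ T₀) ≫ (ρ_ Q).hom)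
    (hqe : IsSplitEpi (T.map (λ_ Q).inv ≫ qh (𝟙_ C) ≫ (T₀ ▷ Q) ≫ (λ_ Q).hom))
    -- a module `(P, p̂, p̌)`
    (P : C)
    (ph : ∀ X : C, T.obj (X ⊗ P) ⟶ T.obj X ⊗ P)
    (pc : ∀ X : C, T.obj (P ⊗ X) ⟶ P ⊗ T.obj X)
    (hphnat : ∀ {X X' : C} (f : X ⟶ X'),
      T.map (f ▷ P) ≫ ph X' = ph X ≫ (T.map f ▷ P))
    (hpcnat : ∀ {X X' : C} (f : X ⟶ X'),
      T.map (P ◁ f) ≫ pc X' = pc X ≫ (P ◁ T.map f))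
    (hph : ∀ X Y : C,
      T.map ((X ◁ ph Y) ≫ (α_ X (T.obj Y) P).inv) ≫ ph (X ⊗ T.obj Y) ≫
          (Th₂ X Y ▷ P) =
        Th₂ X (Y ⊗ P) ≫ (T.obj X ◁ ph Y) ≫ (α_ (T.obj X) (T.obj Y) P).inv)
    (hpc : ∀ X Y : C,
      T.map ((pc X ▷ Y) ≫ (α_ P (T.obj X) Y).hom) ≫ pc (T.obj X ⊗ Y) ≫
          (P ◁ Tc₂ X Y) =
        Tc₂ (P ⊗ X) Y ≫ (pc X ▷ T.obj Y) ≫ (α_ P (T.obj X) (T.obj Y)).hom)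
    (hpcompat₁ : ∀ X Y : C,
      T.map (α_ (T.obj X) Y P).inv ≫ ph (T.obj X ⊗ Y) ≫ (Tc₂ X Y ▷ P) =
        Tc₂ X (Y ⊗ P) ≫ (T.obj X ◁ ph Y) ≫ (α_ (T.obj X) (T.obj Y) P).inv)
    (hpcompat₂ : ∀ X Y : C,
      pc (X ⊗ T.obj Y) ≫ (P ◁ Th₂ X Y) =
        T.map (α_ P X (T.obj Y)).inv ≫ Th₂ (P ⊗ X) Y ≫ (pc X ▷ T.obj Y) ≫
          (α_ P (T.obj X) (T.obj Y)).hom)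
    (hpact : T.map (λ_ P).inv ≫ ph (𝟙_ C) ≫ (T₀ ▷ P) ≫ (λ_ P).hom =
      T.map (ρ_ P).inv ≫ pc (𝟙_ C) ≫ (P ◁ T₀) ≫ (ρ_ P).hom)
    (hpe : IsSplitEpi (T.map (λ_ P).inv ≫ ph (𝟙_ C) ≫ (T₀ ▷ P) ≫ (λ_ P).hom))
    -- the candidate module structure on `P ⊗ Q`
    (rh : ∀ X : C, T.obj (X ⊗ (P ⊗ Q)) ⟶ T.obj X ⊗ (P ⊗ Q))
    (hrh : ∀ X : C, rh X =
      T.map (α_ X P Q).inv ≫ qh (X ⊗ P) ≫ (ph X ▷ Q) ≫ (α_ (T.obj X) P Q).hom)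
    (rc : ∀ X : C, T.obj ((P ⊗ Q) ⊗ X) ⟶ (P ⊗ Q) ⊗ T.obj X)
    (hrc : ∀ X : C, rc X =
      T.map (α_ P Q X).hom ≫ pc (Q ⊗ X) ≫ (P ◁ qc X) ≫ (α_ P Q (T.obj X)).inv) :
    -- `(P ⊗ Q, r̂)` is a module over the left multiplier bimonad
    (∀ X Y : C,
      T.map ((X ◁ rh Y) ≫ (α_ X (T.obj Y) (P ⊗ Q)).inv) ≫ rh (X ⊗ T.obj Y) ≫
          (Th₂ X Y ▷ (P ⊗ Q)) =
        Th₂ X (Y ⊗ (P ⊗ Q)) ≫ (T.obj X ◁ rh Y) ≫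
          (α_ (T.obj X) (T.obj Y) (P ⊗ Q)).inv) ∧
    -- `(P ⊗ Q, ř)` is a module over the right multiplier bimonad
    (∀ X Y : C,
      T.map ((rc X ▷ Y) ≫ (α_ (P ⊗ Q) (T.obj X) Y).hom) ≫ rc (T.obj X ⊗ Y) ≫
          ((P ⊗ Q) ◁ Tc₂ X Y) =
        Tc₂ ((P ⊗ Q) ⊗ X) Y ≫ (rc X ▷ T.obj Y) ≫
          (α_ (P ⊗ Q) (T.obj X) (T.obj Y)).hom) ∧
    -- the compatibility conditions of a module hold for `(r̂, ř)`
    (∀ X Y : C,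
      T.map (α_ (T.obj X) Y (P ⊗ Q)).inv ≫ rh (T.obj X ⊗ Y) ≫
          (Tc₂ X Y ▷ (P ⊗ Q)) =
        Tc₂ X (Y ⊗ (P ⊗ Q)) ≫ (T.obj X ◁ rh Y) ≫
          (α_ (T.obj X) (T.obj Y) (P ⊗ Q)).inv) ∧
    (∀ X Y : C,
      rc (X ⊗ T.obj Y) ≫ ((P ⊗ Q) ◁ Th₂ X Y) =
        T.map (α_ (P ⊗ Q) X (T.obj Y)).inv ≫ Th₂ ((P ⊗ Q) ⊗ X) Y ≫
          (rc X ▷ T.obj Y) ≫ (α_ (P ⊗ Q) (T.obj X) (T.obj Y)).hom) ∧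
    -- the interchange law `p̌_{X⊗Q} ≫ (1_P ⊗ q̂_X) = q̂_{P⊗X} ≫ (p̌_X ⊗ 1_Q)`
    (∀ X : C,
      pc (X ⊗ Q) ≫ (P ◁ qh X) =
        T.map (α_ P X Q).inv ≫ qh (P ⊗ X) ≫ (pc X ▷ Q) ≫
          (α_ P (T.obj X) Q).hom) ∧
    -- the two induced actions on `P ⊗ Q` agree, and they form a split epimorphism
    (T.map (λ_ (P ⊗ Q)).inv ≫ rh (𝟙_ C) ≫ (T₀ ▷ (P ⊗ Q)) ≫ (λ_ (P ⊗ Q)).hom =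
      T.map (ρ_ (P ⊗ Q)).inv ≫ rc (𝟙_ C) ≫ ((P ⊗ Q) ◁ T₀) ≫ (ρ_ (P ⊗ Q)).hom) ∧
    IsSplitEpi
      (T.map (λ_ (P ⊗ Q)).inv ≫ rh (𝟙_ C) ≫ (T₀ ▷ (P ⊗ Q)) ≫
        (λ_ (P ⊗ Q)).hom) := by
  -- Part 1: left module axiom for `rh`
  have part1 : ∀ X Y : C,
      T.map ((X ◁ rh Y) ≫ (α_ X (T.obj Y) (P ⊗ Q)).inv) ≫ rh (X ⊗ T.obj Y) ≫
          (Th₂ X Y ▷ (P ⊗ Q)) =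
        Th₂ X (Y ⊗ (P ⊗ Q)) ≫ (T.obj X ◁ rh Y) ≫
          (α_ (T.obj X) (T.obj Y) (P ⊗ Q)).inv := by
    intro X Y
    have c1 : T.map (X ◁ (ph Y ▷ Q)) ≫ T.map (X ◁ (α_ (T.obj Y) P Q).hom) ≫
        T.map (α_ X (T.obj Y) (P ⊗ Q)).inv ≫ T.map (α_ (X ⊗ T.obj Y) P Q).inv =
        T.map (α_ X (T.obj (Y ⊗ P)) Q).inv ≫ T.map ((X ◁ ph Y) ▷ Q) ≫
          T.map ((α_ X (T.obj Y) P).inv ▷ Q) := by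
      simp only [← Functor.map_comp]; congr 1; monoidal
    have c2 : (α_ (T.obj (X ⊗ T.obj Y)) P Q).hom ≫ (Th₂ X Y ▷ (P ⊗ Q)) =
        ((Th₂ X Y ▷ P) ▷ Q) ≫ (α_ (T.obj X ⊗ T.obj Y) P Q).hom := by monoidal
    have hn1 := hqhnat (α_ X (T.obj Y) P).inv
    have hn2 := hqhnat (X ◁ ph Y)
    have hphQ : (T.map ((X ◁ ph Y) ≫ (α_ X (T.obj Y) P).inv) ≫ ph (X ⊗ T.obj Y) ≫
        (Th₂ X Y ▷ P)) ▷ Q = (Th₂ X (Y ⊗ P) ≫ (T.obj X ◁ ph Y) ≫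
        (α_ (T.obj X) (T.obj Y) P).inv) ▷ Q := by rw [hph]
    simp only [Functor.map_comp, comp_whiskerRight, assoc] at hphQ
    have hqh' := hqh X (Y ⊗ P)
    simp only [Functor.map_comp, assoc] at hqh'
    have hth : T.map (X ◁ T.map (α_ Y P Q).inv) ≫ Th₂ X ((Y ⊗ P) ⊗ Q) =
        Th₂ X (Y ⊗ (P ⊗ Q)) ≫ (T.obj X ◁ T.map (α_ Y P Q).inv) := by
      simpa using hThnat (𝟙 X) (α_ Y P Q).inv
    simp only [hrh, Functor.map_comp, MonoidalCategory.whiskerLeft_comp,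
      comp_whiskerRight, assoc]
    rw [reassoc_of% c1, reassoc_of% hn1, reassoc_of% hn2, c2,
      reassoc_of% hphQ, reassoc_of% hqh', reassoc_of% hth]
    monoidal
  -- Part 2: right module axiom for `rc`
  have part2 : ∀ X Y : C,
      T.map ((rc X ▷ Y) ≫ (α_ (P ⊗ Q) (T.obj X) Y).hom) ≫ rc (T.obj X ⊗ Y) ≫
          ((P ⊗ Q) ◁ Tc₂ X Y) =
        Tc₂ ((P ⊗ Q) ⊗ X) Y ≫ (rc X ▷ T.obj Y) ≫
          (α_ (P ⊗ Q) (T.obj X) (T.obj Y)).hom := by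
    intro X Y
    have d1 : T.map ((P ◁ qc X) ▷ Y) ≫ T.map ((α_ P Q (T.obj X)).inv ▷ Y) ≫
        T.map (α_ (P ⊗ Q) (T.obj X) Y).hom ≫ T.map (α_ P Q (T.obj X ⊗ Y)).hom =
        T.map (α_ P (T.obj (Q ⊗ X)) Y).hom ≫ T.map (P ◁ (qc X ▷ Y)) ≫
          T.map (P ◁ (α_ Q (T.obj X) Y).hom) := by
      simp only [← Functor.map_comp]; congr 1; monoidal
    have d2 : (α_ P Q (T.obj (T.obj X ⊗ Y))).inv ≫ ((P ⊗ Q) ◁ Tc₂ X Y) =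
        (P ◁ (Q ◁ Tc₂ X Y)) ≫ (α_ P Q (T.obj X ⊗ T.obj Y)).inv := by monoidal
    have dn1 := hpcnat ((qc X ▷ Y) ≫ (α_ Q (T.obj X) Y).hom)
    simp only [Functor.map_comp, MonoidalCategory.whiskerLeft_comp, assoc] at dn1
    have dqc : P ◁ (T.map ((qc X ▷ Y) ≫ (α_ Q (T.obj X) Y).hom) ≫
        qc (T.obj X ⊗ Y) ≫ (Q ◁ Tc₂ X Y)) = P ◁ (Tc₂ (Q ⊗ X) Y ≫
        (qc X ▷ T.obj Y) ≫ (α_ Q (T.obj X) (T.obj Y)).hom) := by rw [hqc]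
    simp only [Functor.map_comp, MonoidalCategory.whiskerLeft_comp, assoc] at dqc
    have dpc := hpc (Q ⊗ X) Y
    simp only [Functor.map_comp, assoc] at dpc
    have dtc : T.map (T.map (α_ P Q X).hom ▷ Y) ≫ Tc₂ (P ⊗ (Q ⊗ X)) Y =
        Tc₂ ((P ⊗ Q) ⊗ X) Y ≫ (T.map (α_ P Q X).hom ▷ T.obj Y) := by
      simpa using hTcnat (α_ P Q X).hom (𝟙 Y)
    simp only [hrc, Functor.map_comp, MonoidalCategory.whiskerLeft_comp,
      comp_whiskerRight, assoc]
    rw [d2, reassoc_of% d1, reassoc_of% dn1, reassoc_of% dqc, reassoc_of% dpc,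
      reassoc_of% dtc]
    monoidal
  -- Part 3: first module compatibility for `rh`
  have part3 : ∀ X Y : C,
      T.map (α_ (T.obj X) Y (P ⊗ Q)).inv ≫ rh (T.obj X ⊗ Y) ≫
          (Tc₂ X Y ▷ (P ⊗ Q)) =
        Tc₂ X (Y ⊗ (P ⊗ Q)) ≫ (T.obj X ◁ rh Y) ≫
          (α_ (T.obj X) (T.obj Y) (P ⊗ Q)).inv := by
    intro X Y
    have c1 : T.map (α_ (T.obj X) Y (P ⊗ Q)).inv ≫
        T.map (α_ (T.obj X ⊗ Y) P Q).inv =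
        T.map (T.obj X ◁ (α_ Y P Q).inv) ≫ T.map (α_ (T.obj X) (Y ⊗ P) Q).inv ≫
          T.map ((α_ (T.obj X) Y P).inv ▷ Q) := by
      simp only [← Functor.map_comp]; congr 1; monoidal
    have hn1 := hqhnat (α_ (T.obj X) Y P).inv
    have c2 : (α_ (T.obj (T.obj X ⊗ Y)) P Q).hom ≫ (Tc₂ X Y ▷ (P ⊗ Q)) =
        ((Tc₂ X Y ▷ P) ▷ Q) ≫ (α_ (T.obj X ⊗ T.obj Y) P Q).hom := by monoidal
    have hp1Q : (T.map (α_ (T.obj X) Y P).inv ≫ ph (T.obj X ⊗ Y) ≫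
        (Tc₂ X Y ▷ P)) ▷ Q = (Tc₂ X (Y ⊗ P) ≫ (T.obj X ◁ ph Y) ≫
        (α_ (T.obj X) (T.obj Y) P).inv) ▷ Q := by rw [hpcompat₁]
    simp only [Functor.map_comp, comp_whiskerRight, assoc] at hp1Q
    have hq1 := hqcompat₁ X (Y ⊗ P)
    have htc : T.map (T.obj X ◁ (α_ Y P Q).inv) ≫ Tc₂ X ((Y ⊗ P) ⊗ Q) =
        Tc₂ X (Y ⊗ (P ⊗ Q)) ≫ (T.obj X ◁ T.map (α_ Y P Q).inv) := by
      simpa using hTcnat (𝟙 X) (α_ Y P Q).inv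
    simp only [hrh, Functor.map_comp, MonoidalCategory.whiskerLeft_comp,
      comp_whiskerRight, assoc]
    rw [reassoc_of% c1, reassoc_of% hn1, c2, reassoc_of% hp1Q, reassoc_of% hq1,
      reassoc_of% htc]
    monoidal
  -- Part 4: second module compatibility for `rc`
  have part4 : ∀ X Y : C,
      rc (X ⊗ T.obj Y) ≫ ((P ⊗ Q) ◁ Th₂ X Y) =
        T.map (α_ (P ⊗ Q) X (T.obj Y)).inv ≫ Th₂ ((P ⊗ Q) ⊗ X) Y ≫
          (rc X ▷ T.obj Y) ≫ (α_ (P ⊗ Q) (T.obj X) (T.obj Y)).hom := by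
    intro X Y
    have e1 : (α_ P Q (T.obj (X ⊗ T.obj Y))).inv ≫ ((P ⊗ Q) ◁ Th₂ X Y) =
        (P ◁ (Q ◁ Th₂ X Y)) ≫ (α_ P Q (T.obj X ⊗ T.obj Y)).inv := by monoidal
    have e2 : P ◁ (qc (X ⊗ T.obj Y) ≫ (Q ◁ Th₂ X Y)) =
        P ◁ (T.map (α_ Q X (T.obj Y)).inv ≫ Th₂ (Q ⊗ X) Y ≫
          (qc X ▷ T.obj Y) ≫ (α_ Q (T.obj X) (T.obj Y)).hom) := by rw [hqcompat₂]
    simp only [MonoidalCategory.whiskerLeft_comp] at e2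
    have e3 := hpcnat (α_ Q X (T.obj Y)).inv
    have e4 := hpcompat₂ (Q ⊗ X) Y
    have e5 : T.map (α_ P Q (X ⊗ T.obj Y)).hom ≫
        T.map (P ◁ (α_ Q X (T.obj Y)).inv) ≫
        T.map (α_ P (Q ⊗ X) (T.obj Y)).inv =
        T.map (α_ (P ⊗ Q) X (T.obj Y)).inv ≫
          T.map ((α_ P Q X).hom ▷ T.obj Y) := by
      simp only [← Functor.map_comp]; congr 1; monoidal
    have e6 : T.map ((α_ P Q X).hom ▷ T.obj Y) ≫ Th₂ (P ⊗ (Q ⊗ X)) Y =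
        Th₂ ((P ⊗ Q) ⊗ X) Y ≫ (T.map (α_ P Q X).hom ▷ T.obj Y) := by
      simpa using hThnat (α_ P Q X).hom (𝟙 Y)
    simp only [hrc, Functor.map_comp, MonoidalCategory.whiskerLeft_comp, assoc]
    rw [e1, reassoc_of% e2, ← reassoc_of% e3, reassoc_of% e4, reassoc_of% e5,
      reassoc_of% e6]
    monoidal
  -- the `★` lemma for the right action of `P`
  have starp : ∀ Y : C,
      T.map ((T.map (ρ_ P).inv ≫ pc (𝟙_ C) ≫ (P ◁ T₀) ≫ (ρ_ P).hom) ▷ Y) ≫ pc Y =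
        Tc₂ P Y ≫ ((T.map (ρ_ P).inv ≫ pc (𝟙_ C) ≫ (P ◁ T₀) ≫ (ρ_ P).hom) ▷
          T.obj Y) := by
    intro Y
    have w1 : T.map ((P ◁ T₀) ▷ Y) ≫ T.map ((ρ_ P).hom ▷ Y) =
        T.map (α_ P (T.obj (𝟙_ C)) Y).hom ≫ T.map (P ◁ (T₀ ▷ Y)) ≫
          T.map (P ◁ (λ_ Y).hom) := by
      simp only [← Functor.map_comp]; congr 1; monoidal
    have w2 := hpcnat ((T₀ ▷ Y) ≫ (λ_ Y).hom)
    simp only [Functor.map_comp, MonoidalCategory.whiskerLeft_comp, assoc] at w2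
    have w3 : P ◁ T.map ((T₀ ▷ Y) ≫ (λ_ Y).hom) =
        P ◁ (Tc₂ (𝟙_ C) Y ≫ (T₀ ▷ T.obj Y) ≫ (λ_ (T.obj Y)).hom) := by
      rw [hTccou]
    simp only [Functor.map_comp, MonoidalCategory.whiskerLeft_comp, assoc] at w3
    have w4 := hpc (𝟙_ C) Y
    simp only [Functor.map_comp, assoc] at w4
    have w5 : T.map (T.map (ρ_ P).inv ▷ Y) ≫ Tc₂ (P ⊗ 𝟙_ C) Y =
        Tc₂ P Y ≫ (T.map (ρ_ P).inv ▷ T.obj Y) := by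
      simpa using hTcnat (ρ_ P).inv (𝟙 Y)
    simp only [Functor.map_comp, comp_whiskerRight, assoc]
    rw [reassoc_of% w1, w2, w3, reassoc_of% w4, reassoc_of% w5]
    monoidal
  -- the `★` lemma for the left action of `Q`
  have starq : ∀ X : C,
      T.map (X ◁ (T.map (λ_ Q).inv ≫ qh (𝟙_ C) ≫ (T₀ ▷ Q) ≫ (λ_ Q).hom)) ≫ qh X =
        Th₂ X Q ≫ (T.obj X ◁ (T.map (λ_ Q).inv ≫ qh (𝟙_ C) ≫ (T₀ ▷ Q) ≫
          (λ_ Q).hom)) := by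
    intro X
    have x1 : T.map (X ◁ (T₀ ▷ Q)) ≫ T.map (X ◁ (λ_ Q).hom) =
        T.map (α_ X (T.obj (𝟙_ C)) Q).inv ≫ T.map ((X ◁ T₀) ▷ Q) ≫
          T.map ((ρ_ X).hom ▷ Q) := by
      simp only [← Functor.map_comp]; congr 1; monoidal
    have x2 := hqhnat ((X ◁ T₀) ≫ (ρ_ X).hom)
    simp only [Functor.map_comp, comp_whiskerRight, assoc] at x2
    have x3 : T.map ((X ◁ T₀) ≫ (ρ_ X).hom) ▷ Q =
        (Th₂ X (𝟙_ C) ≫ (T.obj X ◁ T₀) ≫ (ρ_ (T.obj X)).hom) ▷ Q := by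
      rw [hThcou]
    simp only [Functor.map_comp, comp_whiskerRight, assoc] at x3
    have x4 := hqh X (𝟙_ C)
    simp only [Functor.map_comp, assoc] at x4
    have x5 : T.map (X ◁ T.map (λ_ Q).inv) ≫ Th₂ X (𝟙_ C ⊗ Q) =
        Th₂ X Q ≫ (T.obj X ◁ T.map (λ_ Q).inv) := by
      simpa using hThnat (𝟙 X) (λ_ Q).inv
    simp only [Functor.map_comp, MonoidalCategory.whiskerLeft_comp, assoc]
    rw [reassoc_of% x1, x2, x3, reassoc_of% x4, reassoc_of% x5]
    monoidal
  -- Part 5: the interchange law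
  have part5 : ∀ X : C,
      pc (X ⊗ Q) ≫ (P ◁ qh X) =
        T.map (α_ P X Q).inv ≫ qh (P ⊗ X) ≫ (pc X ▷ Q) ≫
          (α_ P (T.obj X) Q).hom := by
    intro X
    have hepc : IsSplitEpi (T.map (ρ_ P).inv ≫ pc (𝟙_ C) ≫ (P ◁ T₀) ≫
        (ρ_ P).hom) := by rw [← hpact]; exact hpe
    haveI := hepc
    have h1 : IsSplitEpi (T.map ((T.map (ρ_ P).inv ≫ pc (𝟙_ C) ≫ (P ◁ T₀) ≫
        (ρ_ P).hom) ▷ (X ⊗ Q))) := IsSplitEpi.mk'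
      ⟨T.map ((section_ (T.map (ρ_ P).inv ≫ pc (𝟙_ C) ≫ (P ◁ T₀) ≫ (ρ_ P).hom)) ▷
          (X ⊗ Q)), by
        rw [← T.map_comp, ← comp_whiskerRight, IsSplitEpi.id,
          id_whiskerRight, T.map_id]⟩
    haveI := h1
    rw [← cancel_epi (T.map ((T.map (ρ_ P).inv ≫ pc (𝟙_ C) ≫ (P ◁ T₀) ≫
        (ρ_ P).hom) ▷ (X ⊗ Q)))]
    have r1 : T.map ((T.map (ρ_ P).inv ≫ pc (𝟙_ C) ≫ (P ◁ T₀) ≫ (ρ_ P).hom) ▷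
          (X ⊗ Q)) ≫ T.map (α_ P X Q).inv =
        T.map (α_ (T.obj P) X Q).inv ≫
          T.map (((T.map (ρ_ P).inv ≫ pc (𝟙_ C) ≫ (P ◁ T₀) ≫ (ρ_ P).hom) ▷ X) ▷
            Q) := by
      simp only [← Functor.map_comp]; congr 1; monoidal
    have r2 := hqhnat ((T.map (ρ_ P).inv ≫ pc (𝟙_ C) ≫ (P ◁ T₀) ≫ (ρ_ P).hom) ▷ X)
    have r3 : (T.map ((T.map (ρ_ P).inv ≫ pc (𝟙_ C) ≫ (P ◁ T₀) ≫ (ρ_ P).hom) ▷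
          X) ▷ Q) ≫ (pc X ▷ Q) =
        (Tc₂ P X ▷ Q) ≫ (((T.map (ρ_ P).inv ≫ pc (𝟙_ C) ≫ (P ◁ T₀) ≫
          (ρ_ P).hom) ▷ T.obj X) ▷ Q) := by
      simp only [← comp_whiskerRight]; rw [starp X]
    rw [reassoc_of% r1, reassoc_of% r2, reassoc_of% r3,
      reassoc_of% (hqcompat₁ P X), reassoc_of% (starp (X ⊗ Q)),
      ← whisker_exchange]
    monoidal
  -- (A): the `rh`-unit action equals `qh P ≫ (e_P ▷ Q)`
  have hA : T.map (λ_ (P ⊗ Q)).inv ≫ rh (𝟙_ C) ≫ (T₀ ▷ (P ⊗ Q)) ≫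
      (λ_ (P ⊗ Q)).hom = qh P ≫
        ((T.map (λ_ P).inv ≫ ph (𝟙_ C) ≫ (T₀ ▷ P) ≫ (λ_ P).hom) ▷ Q) := by
    have a1 : T.map (λ_ (P ⊗ Q)).inv ≫ T.map (α_ (𝟙_ C) P Q).inv =
        T.map ((λ_ P).inv ▷ Q) := by
      simp only [← T.map_comp]; congr 1; monoidal
    have a2 := hqhnat (λ_ P).inv
    simp only [hrh, Functor.map_comp, comp_whiskerRight,
      MonoidalCategory.whiskerLeft_comp, assoc]
    rw [reassoc_of% a1, reassoc_of% a2]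
    monoidal
  -- (B): the `rc`-unit action equals `pc Q ≫ (P ◁ e_Q)`
  have hB : T.map (ρ_ (P ⊗ Q)).inv ≫ rc (𝟙_ C) ≫ ((P ⊗ Q) ◁ T₀) ≫
      (ρ_ (P ⊗ Q)).hom = pc Q ≫
        (P ◁ (T.map (ρ_ Q).inv ≫ qc (𝟙_ C) ≫ (Q ◁ T₀) ≫ (ρ_ Q).hom)) := by
    have b1 : T.map (ρ_ (P ⊗ Q)).inv ≫ T.map (α_ P Q (𝟙_ C)).hom =
        T.map (P ◁ (ρ_ Q).inv) := by
      simp only [← T.map_comp]; congr 1; monoidal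
    have b2 := hpcnat (ρ_ Q).inv
    simp only [hrc, Functor.map_comp, comp_whiskerRight,
      MonoidalCategory.whiskerLeft_comp, assoc]
    rw [reassoc_of% b1, reassoc_of% b2]
    monoidal
  -- (M): the two unit actions agree in the `qh/pc` form
  have hM : qh P ≫ ((T.map (λ_ P).inv ≫ ph (𝟙_ C) ≫ (T₀ ▷ P) ≫ (λ_ P).hom) ▷ Q) =
      pc Q ≫ (P ◁ (T.map (λ_ Q).inv ≫ qh (𝟙_ C) ≫ (T₀ ▷ Q) ≫ (λ_ Q).hom)) := by
    rw [hpact]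
    have m2 : T.map (α_ P (𝟙_ C) Q).hom ≫ pc (𝟙_ C ⊗ Q) ≫ (P ◁ qh (𝟙_ C)) ≫
        (α_ P (T.obj (𝟙_ C)) Q).inv = qh (P ⊗ 𝟙_ C) ≫ (pc (𝟙_ C) ▷ Q) := by
      rw [reassoc_of% (part5 (𝟙_ C))]
      rw [← T.map_comp_assoc, Iso.hom_inv_id, T.map_id, id_comp,
        Iso.hom_inv_id, comp_id]
    have m3 : T.map ((ρ_ P).inv ▷ Q) ≫ T.map (α_ P (𝟙_ C) Q).hom =
        T.map (P ◁ (λ_ Q).inv) := by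
      simp only [← T.map_comp]; congr 1; monoidal
    have m4 := hpcnat (λ_ Q).inv
    simp only [comp_whiskerRight, MonoidalCategory.whiskerLeft_comp, assoc]
    rw [← reassoc_of% (hqhnat (ρ_ P).inv), ← reassoc_of% m2, reassoc_of% m3,
      reassoc_of% m4]
    monoidal
  -- a whisker-exchange helper for `T₀`
  have hexch : ∀ {A B : C} (k : A ⟶ B), (T₀ ▷ A) ≫ (λ_ A).hom ≫ k =
      (T.obj (𝟙_ C) ◁ k) ≫ (T₀ ▷ B) ≫ (λ_ B).hom := by
    intro A B k
    rw [← leftUnitor_naturality, ← whisker_exchange_assoc]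
  -- Claim C: `T(e_P) ≫ e_P = ê_P ≫ e_P`
  have claimC : T.map (T.map (λ_ P).inv ≫ ph (𝟙_ C) ≫ (T₀ ▷ P) ≫ (λ_ P).hom) ≫
      (T.map (λ_ P).inv ≫ ph (𝟙_ C) ≫ (T₀ ▷ P) ≫ (λ_ P).hom) =
      (T.map (λ_ (T.obj P)).inv ≫ Th₂ (𝟙_ C) P ≫ (T₀ ▷ T.obj P) ≫
        (λ_ (T.obj P)).hom) ≫
      (T.map (λ_ P).inv ≫ ph (𝟙_ C) ≫ (T₀ ▷ P) ≫ (λ_ P).hom) := by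
    have cc : T.map (λ_ P).hom ≫ T.map (λ_ P).inv = 𝟙 _ := by
      rw [← T.map_comp, Iso.hom_inv_id, T.map_id]
    have k1 := hphnat T₀
    have k2 : ph (T.obj (𝟙_ C)) = T.map ((λ_ (T.obj (𝟙_ C))).inv ▷ P) ≫
        ph (𝟙_ C ⊗ T.obj (𝟙_ C)) ≫ (T.map (λ_ (T.obj (𝟙_ C))).hom ▷ P) := by
      rw [reassoc_of% (hphnat (λ_ (T.obj (𝟙_ C))).inv), ← comp_whiskerRight,
        ← T.map_comp, Iso.inv_hom_id, T.map_id, id_whiskerRight, comp_id]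
    have k3 : T.map (ph (𝟙_ C)) ≫ T.map ((λ_ (T.obj (𝟙_ C))).inv ▷ P) =
        T.map (λ_ (T.obj (𝟙_ C ⊗ P))).inv ≫ T.map (𝟙_ C ◁ ph (𝟙_ C)) ≫
          T.map (α_ (𝟙_ C) (T.obj (𝟙_ C)) P).inv := by
      simp only [← T.map_comp]; congr 1; monoidal
    have k4' : T.map (λ_ (T.obj (𝟙_ C))).hom ≫ T.map T₀ =
        Th₂ (𝟙_ C) (𝟙_ C) ≫ (T.obj (𝟙_ C) ◁ T₀) ≫ (ρ_ (T.obj (𝟙_ C))).hom := by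
      rw [← T.map_comp, show (λ_ (T.obj (𝟙_ C))).hom ≫ T₀ =
        (𝟙_ C ◁ T₀) ≫ (ρ_ (𝟙_ C)).hom from by
          rw [← unitors_equal]; exact (leftUnitor_naturality T₀).symm, hThcou]
    have k4 : (T.map (λ_ (T.obj (𝟙_ C))).hom ▷ P) ≫ (T.map T₀ ▷ P) =
        (Th₂ (𝟙_ C) (𝟙_ C) ▷ P) ≫ ((T.obj (𝟙_ C) ◁ T₀) ▷ P) ≫
          ((ρ_ (T.obj (𝟙_ C))).hom ▷ P) := by
      simp only [← comp_whiskerRight]; rw [k4']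
    have k5 := hph (𝟙_ C) (𝟙_ C)
    simp only [Functor.map_comp, assoc] at k5
    have kpre : T.map (T.map (λ_ P).inv) ≫ T.map (λ_ (T.obj (𝟙_ C ⊗ P))).inv =
        T.map (λ_ (T.obj P)).inv ≫ T.map (𝟙_ C ◁ T.map (λ_ P).inv) := by
      simp only [← T.map_comp]; congr 1; monoidal
    have h7 : T.map (𝟙_ C ◁ T.map (λ_ P).inv) ≫ Th₂ (𝟙_ C) (𝟙_ C ⊗ P) =
        Th₂ (𝟙_ C) P ≫ (T.obj (𝟙_ C) ◁ T.map (λ_ P).inv) := by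
      simpa using hThnat (𝟙 (𝟙_ C)) (λ_ P).inv
    simp only [Functor.map_comp, assoc]
    rw [reassoc_of% cc, reassoc_of% k1, k2]
    simp only [assoc]
    rw [reassoc_of% k3, reassoc_of% k4, reassoc_of% k5, reassoc_of% kpre]
    rw [reassoc_of% (hexch (T.map (λ_ P).inv)), reassoc_of% (hexch (ph (𝟙_ C))),
      reassoc_of% (hexch (T₀ ▷ P)), ← reassoc_of% h7]
    monoidal
  -- the key computation for the split-epi property
  have hthp : T.map ((T.map (λ_ P).inv ≫ ph (𝟙_ C) ≫ (T₀ ▷ P) ≫ (λ_ P).hom) ▷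
        T.obj Q) ≫ Th₂ P Q =
      Th₂ (T.obj P) Q ≫
        (T.map (T.map (λ_ P).inv ≫ ph (𝟙_ C) ≫ (T₀ ▷ P) ≫ (λ_ P).hom) ▷
          T.obj Q) := by
    simpa using hThnat (T.map (λ_ P).inv ≫ ph (𝟙_ C) ≫ (T₀ ▷ P) ≫ (λ_ P).hom)
      (𝟙 Q)
  have hkey : T.map (((T.map (λ_ P).inv ≫ ph (𝟙_ C) ≫ (T₀ ▷ P) ≫ (λ_ P).hom) ▷
        T.obj Q) ≫
        (P ◁ (T.map (λ_ Q).inv ≫ qh (𝟙_ C) ≫ (T₀ ▷ Q) ≫ (λ_ Q).hom))) ≫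
      qh P ≫ ((T.map (λ_ P).inv ≫ ph (𝟙_ C) ≫ (T₀ ▷ P) ≫ (λ_ P).hom) ▷ Q) =
      (Th₂ (T.obj P) Q ≫ ((T.map (λ_ (T.obj P)).inv ≫ Th₂ (𝟙_ C) P ≫
          (T₀ ▷ T.obj P) ≫ (λ_ (T.obj P)).hom) ▷ T.obj Q)) ≫
        ((T.map (λ_ P).inv ≫ ph (𝟙_ C) ≫ (T₀ ▷ P) ≫ (λ_ P).hom) ▷ T.obj Q) ≫
        (P ◁ (T.map (λ_ Q).inv ≫ qh (𝟙_ C) ≫ (T₀ ▷ Q) ≫ (λ_ Q).hom)) := by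
    rw [T.map_comp, assoc, reassoc_of% (starq P), whisker_exchange,
      reassoc_of% hthp, ← comp_whiskerRight_assoc, claimC,
      comp_whiskerRight_assoc]
    simp only [assoc]
  have base : IsSplitEpi (qh P ≫
      ((T.map (λ_ P).inv ≫ ph (𝟙_ C) ≫ (T₀ ▷ P) ≫ (λ_ P).hom) ▷ Q)) := by
    haveI := hpe
    haveI := hqe
    haveI := hsplith P Q
    refine IsSplitEpi.mk' ⟨(P ◁ section_ (T.map (λ_ Q).inv ≫ qh (𝟙_ C) ≫
        (T₀ ▷ Q) ≫ (λ_ Q).hom)) ≫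
      ((section_ (T.map (λ_ P).inv ≫ ph (𝟙_ C) ≫ (T₀ ▷ P) ≫ (λ_ P).hom)) ▷
        T.obj Q) ≫
      section_ (Th₂ (T.obj P) Q ≫ ((T.map (λ_ (T.obj P)).inv ≫ Th₂ (𝟙_ C) P ≫
          (T₀ ▷ T.obj P) ≫ (λ_ (T.obj P)).hom) ▷ T.obj Q)) ≫
      T.map (((T.map (λ_ P).inv ≫ ph (𝟙_ C) ≫ (T₀ ▷ P) ≫ (λ_ P).hom) ▷
          T.obj Q) ≫
        (P ◁ (T.map (λ_ Q).inv ≫ qh (𝟙_ C) ≫ (T₀ ▷ Q) ≫ (λ_ Q).hom))), ?_⟩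
    simp only [assoc]
    rw [hkey, IsSplitEpi.id_assoc]
    have w : ((section_ (T.map (λ_ P).inv ≫ ph (𝟙_ C) ≫ (T₀ ▷ P) ≫
        (λ_ P).hom)) ▷ T.obj Q) ≫
        ((T.map (λ_ P).inv ≫ ph (𝟙_ C) ≫ (T₀ ▷ P) ≫ (λ_ P).hom) ▷ T.obj Q) =
        𝟙 _ := by
      rw [← comp_whiskerRight, IsSplitEpi.id, id_whiskerRight]
    rw [reassoc_of% w, ← MonoidalCategory.whiskerLeft_comp, IsSplitEpi.id,
      MonoidalCategory.whiskerLeft_id]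
  exact ⟨part1, part2, part3, part4, part5, by rw [hA, hB, hM, hqact],
    by rw [hA]; exact base⟩
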